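/- arXiv:2301.02052 — 7 statements merged into one kernel-verified Lean document; each statement's English description precedes it below -/
import Mathlib

section
/- Let U, Z, W, T be random variables on a probability space with T = τ(Z) a measurable function of Z. If W is conditionally independent of Z given U, and U is conditionally independent of Z given T, then W is conditionally independent of Z given T. -/
open MeasureTheory ProbabilityTheory

section Aux

variable {Ω : Type*} {m m' m₁ m₂ : MeasurableSpace Ω} {mΩ : MeasurableSpace Ω}
  {μ : Measure Ω} [IsProbabilityMeasure μ]

/-- The conditional expectation of an indicator is a.e. bounded by 1. -/
lemma aux_condexp_indicator_bound (hm : m ≤ mΩ) {s : Set Ω}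
    (hs : MeasurableSet s) : ∀ᵐ ω ∂μ, ‖(μ⟦s|m⟧) ω‖ ≤ 1 := by
  have h0 : 0 ≤ᵐ[μ] μ⟦s|m⟧ :=
    condExp_nonneg (Filter.Eventually.of_forall fun ω =>
      Set.indicator_nonneg (fun _ _ => zero_le_one) ω)
  have h1 : μ⟦s|m⟧ ≤ᵐ[μ] μ[(fun _ => (1 : ℝ))|m] :=
    condExp_mono ((integrable_const (1 : ℝ)).indicator hs) (integrable_const 1)
      (Filter.Eventually.of_forall fun ω => by
        by_cases hω : ω ∈ s <;> simp [Set.indicator_apply, hω])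
  have hc : μ[(fun _ => (1 : ℝ))|m] = fun _ => (1 : ℝ) := condExp_const hm 1
  filter_upwards [h0, h1] with ω h0ω h1ω
  simp only [Pi.zero_apply] at h0ω
  rw [hc] at h1ω
  rw [Real.norm_eq_abs, abs_le]
  exact ⟨by linarith, h1ω⟩

/-- Pull-out property in integrated form: for `φ` bounded and `m`-measurable,
`∫ φ * g = ∫ φ * E[g|m]`. -/
lemma aux_pullout (hm : m ≤ mΩ) {φ g : Ω → ℝ}
    (hφ : StronglyMeasurable[m] φ) (hφb : ∀ᵐ ω ∂μ, ‖φ ω‖ ≤ 1) (hg : Integrable g μ) :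
    ∫ ω, φ ω * g ω ∂μ = ∫ ω, φ ω * (μ[g|m]) ω ∂μ := by
  have hmul : μ[φ * g|m] =ᵐ[μ] φ * μ[g|m] :=
    condExp_stronglyMeasurable_mul_of_bound hm hφ hg 1 hφb
  calc ∫ ω, φ ω * g ω ∂μ = ∫ ω, (φ * g) ω ∂μ := rfl
    _ = ∫ ω, (μ[φ * g|m]) ω ∂μ := (integral_condExp hm).symm
    _ = ∫ ω, (φ * μ[g|m]) ω ∂μ := integral_congr_ae hmul
    _ = ∫ ω, φ ω * (μ[g|m]) ω ∂μ := rfl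

omit [IsProbabilityMeasure μ] in
lemma aux_setIntegral_indicator {s r : Set Ω} (hs : MeasurableSet s) (hr : MeasurableSet r) :
    ∫ ω in r, s.indicator (fun _ => (1 : ℝ)) ω ∂μ = (μ (s ∩ r)).toReal := by
  have h : ∫ ω in r, s.indicator (fun _ => (1 : ℝ)) ω ∂μ
      = ∫ ω, (s ∩ r).indicator (fun _ => (1 : ℝ)) ω ∂μ := by
    rw [← integral_indicator hr]
    congr 1
    ext ω
    by_cases hω : ω ∈ r <;> by_cases hω' : ω ∈ s <;>
      simp [Set.indicator_apply, hω, hω']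
  rw [h, integral_indicator_const _ (hs.inter hr), smul_eq_mul, mul_one, measureReal_def]

omit [IsProbabilityMeasure μ] in
lemma aux_setIntegral_eq_mul_indicator {r : Set Ω} (hr : MeasurableSet r) (f : Ω → ℝ) :
    ∫ ω in r, f ω ∂μ = ∫ ω, f ω * r.indicator (fun _ => (1 : ℝ)) ω ∂μ := by
  rw [← integral_indicator hr]
  congr 1
  ext ω
  by_cases hω : ω ∈ r <;> simp [Set.indicator_apply, hω]

/-- From a conditional independence product identity, the key integral identity:
`∫_t E[1_s | m] = μ (s ∩ t)`. -/
lemma aux_setIntegral_condexp_of_prod (hm : m ≤ mΩ) {s t : Set Ω}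
    (hs : MeasurableSet s) (ht : MeasurableSet t)
    (hprod : (μ⟦s ∩ t|m⟧) =ᵐ[μ] (μ⟦s|m⟧) * (μ⟦t|m⟧)) :
    ∫ ω in t, (μ⟦s|m⟧) ω ∂μ = (μ (s ∩ t)).toReal := by
  have h1 : (μ (s ∩ t)).toReal = ∫ ω, (μ⟦s ∩ t|m⟧) ω ∂μ := by
    rw [integral_condExp hm, integral_indicator_const _ (hs.inter ht), smul_eq_mul, mul_one, measureReal_def]
  have h2 : ∫ ω, (μ⟦s ∩ t|m⟧) ω ∂μ = ∫ ω, (μ⟦s|m⟧) ω * (μ⟦t|m⟧) ω ∂μ :=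
    integral_congr_ae hprod
  have h3 : ∫ ω, (μ⟦s|m⟧) ω * t.indicator (fun _ => (1 : ℝ)) ω ∂μ
      = ∫ ω, (μ⟦s|m⟧) ω * (μ⟦t|m⟧) ω ∂μ :=
    aux_pullout hm stronglyMeasurable_condExp (aux_condexp_indicator_bound hm hs)
      ((integrable_const (1 : ℝ)).indicator ht)
  rw [h1, h2, ← h3, ← aux_setIntegral_eq_mul_indicator ht]

/-- The key claim: under the two conditional independence product identities,
`∫_v E[1_s | m'] = μ (s ∩ v)` for every `m₂`-measurable `v`. -/
lemma aux_claim (hm' : m' ≤ mΩ) (hm₁ : m₁ ≤ mΩ) (hm₂ : m₂ ≤ mΩ)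
    (hTZ : ∀ {r : Set Ω}, MeasurableSet[m'] r → MeasurableSet[m₂] r)
    {s : Set Ω} (hs : MeasurableSet s)
    (hprodWZ : ∀ t : Set Ω, MeasurableSet[m₂] t →
      (μ⟦s ∩ t|m₁⟧) =ᵐ[μ] (μ⟦s|m₁⟧) * (μ⟦t|m₁⟧))
    (hprodUZ : ∀ u v : Set Ω, MeasurableSet[m₁] u → MeasurableSet[m₂] v →
      (μ⟦u ∩ v|m'⟧) =ᵐ[μ] (μ⟦u|m'⟧) * (μ⟦v|m'⟧))
    {v : Set Ω} (hv : MeasurableSet[m₂] v) :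
    ∫ ω in v, (μ⟦s|m'⟧) ω ∂μ = (μ (s ∩ v)).toReal := by
  have hv' : MeasurableSet v := hm₂ v hv
  -- (b5) : E[1_s | m'] = E[ E[1_s | m₁] | m']
  have h5 : (μ⟦s|m'⟧) =ᵐ[μ] μ[(μ⟦s|m₁⟧)|m'] := by
    refine ae_eq_condExp_of_forall_setIntegral_eq hm' integrable_condExp
      (fun r _ _ => integrable_condExp.integrableOn) (fun r hr _ => ?_)
      (StronglyMeasurable.aestronglyMeasurable stronglyMeasurable_condExp)
    rw [setIntegral_condExp hm' ((integrable_const (1 : ℝ)).indicator hs) hr,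
      aux_setIntegral_indicator hs (hm' r hr),
      aux_setIntegral_condexp_of_prod hm₁ hs (hm' r hr) (hprodWZ r (hTZ hr))]
  -- (b2) : E[1_v | m₁] = E[ E[1_v | m'] | m₁]
  have h2 : (μ⟦v|m₁⟧) =ᵐ[μ] μ[(μ⟦v|m'⟧)|m₁] := by
    refine ae_eq_condExp_of_forall_setIntegral_eq hm₁ integrable_condExp
      (fun u _ _ => integrable_condExp.integrableOn) (fun u hu _ => ?_)
      (StronglyMeasurable.aestronglyMeasurable stronglyMeasurable_condExp)
    have hvu : (μ⟦v ∩ u|m'⟧) =ᵐ[μ] (μ⟦v|m'⟧) * (μ⟦u|m'⟧) := by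
      have h := hprodUZ u v hu hv
      rw [Set.inter_comm u v] at h
      exact h.trans (Filter.Eventually.of_forall fun ω => mul_comm _ _)
    rw [setIntegral_condExp hm₁ ((integrable_const (1 : ℝ)).indicator hv') hu,
      aux_setIntegral_indicator hv' (hm₁ u hu),
      aux_setIntegral_condexp_of_prod hm' hv' (hm₁ u hu) hvu]
  calc ∫ ω in v, (μ⟦s|m'⟧) ω ∂μ
      = ∫ ω, (μ⟦s|m'⟧) ω * v.indicator (fun _ => (1 : ℝ)) ω ∂μ :=
        aux_setIntegral_eq_mul_indicator hv' _
    _ = ∫ ω, (μ⟦s|m'⟧) ω * (μ⟦v|m'⟧) ω ∂μ :=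
        aux_pullout hm' stronglyMeasurable_condExp (aux_condexp_indicator_bound hm' hs)
          ((integrable_const (1 : ℝ)).indicator hv')
    _ = ∫ ω, (μ[(μ⟦s|m₁⟧)|m']) ω * (μ⟦v|m'⟧) ω ∂μ := by
        refine integral_congr_ae ?_
        filter_upwards [h5] with ω hω
        show _ * _ = _ * _
        rw [hω]
    _ = ∫ ω, (μ⟦v|m'⟧) ω * (μ[(μ⟦s|m₁⟧)|m']) ω ∂μ := by
        congr 1; funext ω; ring
    _ = ∫ ω, (μ⟦v|m'⟧) ω * (μ⟦s|m₁⟧) ω ∂μ :=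
        (aux_pullout hm' stronglyMeasurable_condExp (aux_condexp_indicator_bound hm' hv')
          integrable_condExp).symm
    _ = ∫ ω, (μ⟦s|m₁⟧) ω * (μ⟦v|m'⟧) ω ∂μ := by
        congr 1; funext ω; ring
    _ = ∫ ω, (μ⟦s|m₁⟧) ω * (μ[(μ⟦v|m'⟧)|m₁]) ω ∂μ :=
        aux_pullout hm₁ stronglyMeasurable_condExp (aux_condexp_indicator_bound hm₁ hs)
          integrable_condExp
    _ = ∫ ω, (μ⟦s|m₁⟧) ω * (μ⟦v|m₁⟧) ω ∂μ := by
        refine integral_congr_ae ?_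
        filter_upwards [h2] with ω hω
        show _ * _ = _ * _
        rw [hω]
    _ = ∫ ω, (μ⟦s|m₁⟧) ω * v.indicator (fun _ => (1 : ℝ)) ω ∂μ :=
        (aux_pullout hm₁ stronglyMeasurable_condExp (aux_condexp_indicator_bound hm₁ hs)
          ((integrable_const (1 : ℝ)).indicator hv')).symm
    _ = ∫ ω in v, (μ⟦s|m₁⟧) ω ∂μ := (aux_setIntegral_eq_mul_indicator hv' _).symm
    _ = (μ (s ∩ v)).toReal :=
        aux_setIntegral_condexp_of_prod hm₁ hs hv' (hprodWZ v hv)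

/-- Final assembly: the product identity conditioned on `m'`. -/
lemma aux_final (hm' : m' ≤ mΩ) (hm₂ : m₂ ≤ mΩ)
    (hTZ : ∀ {r : Set Ω}, MeasurableSet[m'] r → MeasurableSet[m₂] r)
    {s t : Set Ω} (hs : MeasurableSet s) (ht₂ : MeasurableSet[m₂] t)
    (hclaim : ∀ v : Set Ω, MeasurableSet[m₂] v →
      ∫ ω in v, (μ⟦s|m'⟧) ω ∂μ = (μ (s ∩ v)).toReal) :
    (μ⟦s ∩ t|m'⟧) =ᵐ[μ] (μ⟦s|m'⟧) * (μ⟦t|m'⟧) := by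
  have ht' : MeasurableSet t := hm₂ t ht₂
  refine (ae_eq_condExp_of_forall_setIntegral_eq hm'
    ((integrable_const (1 : ℝ)).indicator (hs.inter ht'))
    (fun r _ _ => ?_) (fun r hr _ => ?_)
    (StronglyMeasurable.aestronglyMeasurable
      (stronglyMeasurable_condExp.mul stronglyMeasurable_condExp))).symm
  · exact (integrable_condExp.bdd_mul
      ((stronglyMeasurable_condExp.mono hm').aestronglyMeasurable)
      (aux_condexp_indicator_bound hm' hs)).integrableOn
  · have hr' : MeasurableSet r := hm' r hr
    have hφ : StronglyMeasurable[m'] fun ω =>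
        r.indicator (fun _ => (1 : ℝ)) ω * (μ⟦s|m'⟧) ω :=
      (stronglyMeasurable_const.indicator hr).mul stronglyMeasurable_condExp
    have hφb : ∀ᵐ ω ∂μ, ‖r.indicator (fun _ => (1 : ℝ)) ω * (μ⟦s|m'⟧) ω‖ ≤ 1 := by
      filter_upwards [aux_condexp_indicator_bound (μ := μ) hm' hs] with ω hω
      rw [norm_mul]
      have h1 : ‖r.indicator (fun _ => (1 : ℝ)) ω‖ ≤ 1 := by
        by_cases hωr : ω ∈ r <;> simp [Set.indicator_apply, hωr]
      calc ‖r.indicator (fun _ => (1 : ℝ)) ω‖ * ‖(μ⟦s|m'⟧) ω‖ ≤ 1 * 1 :=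
            mul_le_mul h1 hω (norm_nonneg _) zero_le_one
        _ = 1 := mul_one 1
    calc ∫ ω in r, ((μ⟦s|m'⟧) * (μ⟦t|m'⟧)) ω ∂μ
        = ∫ ω, (fun ω => r.indicator (fun _ => (1 : ℝ)) ω * (μ⟦s|m'⟧) ω) ω
            * (μ⟦t|m'⟧) ω ∂μ := by
          rw [aux_setIntegral_eq_mul_indicator hr' _]
          congr 1; funext ω; simp only [Pi.mul_apply]; ring
      _ = ∫ ω, (fun ω => r.indicator (fun _ => (1 : ℝ)) ω * (μ⟦s|m'⟧) ω) ω
            * t.indicator (fun _ => (1 : ℝ)) ω ∂μ :=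
          (aux_pullout hm' hφ hφb ((integrable_const (1 : ℝ)).indicator ht')).symm
      _ = ∫ ω, (μ⟦s|m'⟧) ω * (t ∩ r).indicator (fun _ => (1 : ℝ)) ω ∂μ := by
          congr 1; funext ω
          by_cases hωr : ω ∈ r <;> by_cases hωt : ω ∈ t <;>
            simp [Set.indicator_apply, hωr, hωt]
      _ = ∫ ω in t ∩ r, (μ⟦s|m'⟧) ω ∂μ :=
          (aux_setIntegral_eq_mul_indicator (ht'.inter hr') _).symm
      _ = (μ (s ∩ (t ∩ r))).toReal := hclaim (t ∩ r) (ht₂.inter (hTZ hr))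
      _ = (μ (s ∩ t ∩ r)).toReal := by rw [Set.inter_assoc]
      _ = ∫ ω in r, (s ∩ t).indicator (fun _ => (1 : ℝ)) ω ∂μ :=
          (aux_setIntegral_indicator (hs.inter ht') hr').symm

end Aux

/-- If `W ⊥ Z | U` and `U ⊥ Z | T` where `T = τ(Z)` is a measurable
function of `Z`, then `W ⊥ Z | T`. -/
theorem conditional_independence_transfer
    {Ω 𝓤 𝓩 𝓦 𝓣 : Type*} [MeasurableSpace Ω] [StandardBorelSpace Ω]
    [MeasurableSpace 𝓤] [MeasurableSpace 𝓩] [MeasurableSpace 𝓦] [MeasurableSpace 𝓣]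
    (μ : Measure Ω) [IsProbabilityMeasure μ]
    (U : Ω → 𝓤) (Z : Ω → 𝓩) (W : Ω → 𝓦) (τ : 𝓩 → 𝓣)
    (hU : Measurable U) (hZ : Measurable Z) (hW : Measurable W) (hτ : Measurable τ)
    (hWZU : CondIndepFun (MeasurableSpace.comap U inferInstance) hU.comap_le W Z μ)
    (hUZT : CondIndepFun (MeasurableSpace.comap (fun ω => τ (Z ω)) inferInstance)
      ((hτ.comp hZ).comap_le) U Z μ) :
    CondIndepFun (MeasurableSpace.comap (fun ω => τ (Z ω)) inferInstance)
      ((hτ.comp hZ).comap_le) W Z μ := by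
  have hmT : MeasurableSpace.comap (fun ω => τ (Z ω)) inferInstance ≤ _ :=
    (hτ.comp hZ).comap_le
  have hmU : MeasurableSpace.comap U inferInstance ≤ _ := hU.comap_le
  have hmZ : MeasurableSpace.comap Z inferInstance ≤ _ := hZ.comap_le
  have hTZ : ∀ {r : Set Ω},
      MeasurableSet[MeasurableSpace.comap (fun ω => τ (Z ω)) inferInstance] r →
      MeasurableSet[MeasurableSpace.comap Z inferInstance] r := by
    rintro r ⟨C, hC, rfl⟩
    exact ⟨τ ⁻¹' C, hτ hC, rfl⟩
  have hprodWZ := (condIndepFun_iff _ hmU W Z hW hZ μ).mp hWZU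
  have hprodUZ := (condIndepFun_iff _ hmT U Z hU hZ μ).mp hUZT
  rw [condIndepFun_iff _ hmT W Z hW hZ μ]
  intro s t hs ht
  have hs' : MeasurableSet s := hW.comap_le s hs
  exact aux_final hmT hmZ hTZ hs' ht
    (fun v hv => aux_claim hmT hmU hmZ hTZ hs'
      (fun t' ht' => hprodWZ s t' hs ht')
      (fun u v' hu hv' => hprodUZ u v' hu hv') hv)
end

section
/- Let U, Z, W be discrete random variables with W conditionally independent of Z given U, and suppose W is complete for U (i.e., for any bounded function g, E[g(U) | W] = 0 almost surely implies g(U) = 0 almost surely). If T = τ(Z) is a measurable function of Z such that W is conditionally independent of Z given T, then U is conditionally independent of Z given T. -/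
-- Probability of an event on a finite probability space with weights `p`.
open Classical in
noncomputable def pr {Ω : Type*} [Fintype Ω] (p : Ω → ℝ) (E : Ω → Prop) : ℝ :=
  ∑ ω, if E ω then p ω else 0

-- `∑_{ω ∈ E} p ω * f ω`, the unnormalized conditional expectation of `f` on event `E`.
open Classical in
noncomputable def cex {Ω : Type*} [Fintype Ω] (p : Ω → ℝ) (f : Ω → ℝ) (E : Ω → Prop) : ℝ :=
  ∑ ω, if E ω then p ω * f ω else 0

lemma pr_congr {Ω : Type*} [Fintype Ω] (p : Ω → ℝ) {E F : Ω → Prop}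
    (h : ∀ ω, E ω ↔ F ω) : pr p E = pr p F := by
  unfold pr
  exact Finset.sum_congr rfl fun ω _ => by rw [(h ω).eq]

lemma pr_pos {Ω : Type*} [Fintype Ω] (p : Ω → ℝ) (hp : ∀ ω, 0 < p ω)
    {E : Ω → Prop} (ω0 : Ω) (h : E ω0) : 0 < pr p E := by
  classical
  unfold pr
  refine Finset.sum_pos' (fun ω _ => ?_) ⟨ω0, Finset.mem_univ _, ?_⟩
  · split <;> simp [le_of_lt (hp ω)]
  · rw [if_pos h]; exact hp ω0

lemma pr_eq_zero {Ω : Type*} [Fintype Ω] (p : Ω → ℝ)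
    {E : Ω → Prop} (h : ∀ ω, ¬ E ω) : pr p E = 0 := by
  unfold pr
  exact Finset.sum_eq_zero fun ω _ => if_neg (h ω)

open Classical in
lemma pr_partition {Ω 𝓧 : Type*} [Fintype Ω] (p : Ω → ℝ) (φ : Ω → Prop)
    (f : Ω → 𝓧) (ψ : 𝓧 → Prop) :
    pr p (fun ω => φ ω ∧ ψ (f ω)) =
      ∑ x ∈ (Finset.univ.image f).filter ψ, pr p (fun ω => φ ω ∧ f ω = x) := by
  unfold pr
  rw [Finset.sum_comm]
  refine Finset.sum_congr rfl fun ω _ => ?_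
  by_cases h1 : φ ω <;> by_cases h2 : ψ (f ω) <;>
    simp [h1, h2, Finset.sum_ite_eq, Finset.mem_filter, Finset.mem_image]

open Classical in
lemma pr_marginal {Ω 𝓧 : Type*} [Fintype Ω] (p : Ω → ℝ) (φ : Ω → Prop)
    (f : Ω → 𝓧) :
    pr p φ = ∑ x ∈ Finset.univ.image f, pr p (fun ω => φ ω ∧ f ω = x) := by
  classical
  rw [pr_congr p (show ∀ ω, φ ω ↔ (φ ω ∧ True) from fun ω => by tauto),
    pr_partition p φ f (fun _ => True), Finset.filter_true]

open Classical in
lemma cex_comp {Ω 𝓧 : Type*} [Fintype Ω] (p : Ω → ℝ) (E : Ω → Prop)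
    (f : Ω → 𝓧) (g : 𝓧 → ℝ) :
    cex p (fun ω => g (f ω)) E =
      ∑ x ∈ Finset.univ.image f, g x * pr p (fun ω => E ω ∧ f ω = x) := by
  unfold cex pr
  simp_rw [Finset.mul_sum]
  rw [Finset.sum_comm]
  refine Finset.sum_congr rfl fun ω _ => ?_
  by_cases hE : E ω <;>
    simp [hE, mul_ite, Finset.sum_ite_eq, Finset.mem_image, mul_comm]

open Classical in
theorem U_indep_Z_given_T_aux {Ω 𝓤 𝓩 𝓦 𝓣 : Type*} [Fintype Ω]
    (p : Ω → ℝ) (hp : ∀ ω, 0 < p ω) (hsum : ∑ ω, p ω = 1)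
    (U : Ω → 𝓤) (Z : Ω → 𝓩) (W : Ω → 𝓦) (τ : 𝓩 → 𝓣)
    -- W ⊥ Z | U
    (hWZU : ∀ (w : 𝓦) (z : 𝓩) (u : 𝓤),
      pr p (fun ω => W ω = w ∧ Z ω = z ∧ U ω = u) * pr p (fun ω => U ω = u)
        = pr p (fun ω => W ω = w ∧ U ω = u) * pr p (fun ω => Z ω = z ∧ U ω = u))
    -- completeness of W for U: E[g(U)|W] = 0 a.s. implies g(U) = 0 a.s.
    (hcomplete : ∀ g : 𝓤 → ℝ,
      (∀ w : 𝓦, cex p (fun ω => g (U ω)) (fun ω => W ω = w) = 0) → ∀ ω, g (U ω) = 0)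
    -- W ⊥ Z | T where T = τ ∘ Z
    (hWZT : ∀ (w : 𝓦) (z : 𝓩) (t : 𝓣),
      pr p (fun ω => W ω = w ∧ Z ω = z ∧ τ (Z ω) = t) * pr p (fun ω => τ (Z ω) = t)
        = pr p (fun ω => W ω = w ∧ τ (Z ω) = t) * pr p (fun ω => Z ω = z ∧ τ (Z ω) = t)) :
    -- conclusion: U ⊥ Z | T
    ∀ (u : 𝓤) (z : 𝓩) (t : 𝓣),
      pr p (fun ω => U ω = u ∧ Z ω = z ∧ τ (Z ω) = t) * pr p (fun ω => τ (Z ω) = t)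
        = pr p (fun ω => U ω = u ∧ τ (Z ω) = t) * pr p (fun ω => Z ω = z ∧ τ (Z ω) = t) := by
  intro u z t
  by_cases hzt : τ z = t
  · -- W ⊥ T | U, derived from W ⊥ Z | U by partitioning over z' with τ z' = t
    have hWTU : ∀ (w : 𝓦) (u' : 𝓤),
        pr p (fun ω => W ω = w ∧ τ (Z ω) = t ∧ U ω = u') * pr p (fun ω => U ω = u')
          = pr p (fun ω => W ω = w ∧ U ω = u')
              * pr p (fun ω => τ (Z ω) = t ∧ U ω = u') := by
      intro w u'
      have e1 := (pr_congr p (show ∀ ω, (W ω = w ∧ τ (Z ω) = t ∧ U ω = u')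
              ↔ ((W ω = w ∧ U ω = u') ∧ τ (Z ω) = t) from fun ω => by tauto)).trans
        ((pr_partition p (fun ω => W ω = w ∧ U ω = u') Z (fun z' => τ z' = t)).trans
          (Finset.sum_congr rfl fun z' _ =>
            pr_congr p (show ∀ ω, ((W ω = w ∧ U ω = u') ∧ Z ω = z')
              ↔ (W ω = w ∧ Z ω = z' ∧ U ω = u') from fun ω => by tauto)))
      have e2 := (pr_congr p (show ∀ ω, (τ (Z ω) = t ∧ U ω = u')
              ↔ ((U ω = u') ∧ τ (Z ω) = t) from fun ω => by tauto)).trans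
        ((pr_partition p (fun ω => U ω = u') Z (fun z' => τ z' = t)).trans
          (Finset.sum_congr rfl fun z' _ =>
            pr_congr p (show ∀ ω, ((U ω = u') ∧ Z ω = z')
              ↔ (Z ω = z' ∧ U ω = u') from fun ω => by tauto)))
      rw [e1, e2, Finset.sum_mul, Finset.mul_sum]
      exact Finset.sum_congr rfl fun z' _ => hWZU w z' u'
    -- the completeness test function
    set g : 𝓤 → ℝ := fun u' =>
      (pr p (fun ω => Z ω = z ∧ U ω = u') * pr p (fun ω => τ (Z ω) = t)
        - pr p (fun ω => τ (Z ω) = t ∧ U ω = u') * pr p (fun ω => Z ω = z))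
        / pr p (fun ω => U ω = u') with hg
    -- E[g(U) | W = w] = 0 for every w
    have hcex : ∀ w : 𝓦, cex p (fun ω => g (U ω)) (fun ω => W ω = w) = 0 := by
      intro w
      rw [cex_comp p (fun ω => W ω = w) U g]
      have hterm : ∀ u' ∈ Finset.univ.image U,
          g u' * pr p (fun ω => W ω = w ∧ U ω = u')
            = pr p (fun ω => W ω = w ∧ Z ω = z ∧ U ω = u')
                * pr p (fun ω => τ (Z ω) = t)
              - pr p (fun ω => W ω = w ∧ τ (Z ω) = t ∧ U ω = u')
                * pr p (fun ω => Z ω = z) := by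
        intro u' hu'
        obtain ⟨ω0, -, hω0⟩ := Finset.mem_image.1 hu'
        have hPU : (0:ℝ) < pr p (fun ω => U ω = u') := pr_pos p hp ω0 hω0
        apply mul_right_cancel₀ hPU.ne'
        have hgnum : g u' * pr p (fun ω => U ω = u')
            = pr p (fun ω => Z ω = z ∧ U ω = u') * pr p (fun ω => τ (Z ω) = t)
              - pr p (fun ω => τ (Z ω) = t ∧ U ω = u')
                * pr p (fun ω => Z ω = z) := by
          simp only [hg]
          exact div_mul_cancel₀ _ hPU.ne'
        have h1 := hWZU w z u'
        have h2 := hWTU w u'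
        linear_combination pr p (fun ω => W ω = w ∧ U ω = u') * hgnum
          - pr p (fun ω => τ (Z ω) = t) * h1 + pr p (fun ω => Z ω = z) * h2
      refine (Finset.sum_congr rfl hterm).trans ?_
      rw [Finset.sum_sub_distrib, ← Finset.sum_mul, ← Finset.sum_mul]
      have m1 := (pr_marginal p (fun ω => W ω = w ∧ Z ω = z) U).trans
        (Finset.sum_congr rfl fun u' _ =>
          pr_congr p (show ∀ ω, ((W ω = w ∧ Z ω = z) ∧ U ω = u')
            ↔ (W ω = w ∧ Z ω = z ∧ U ω = u') from fun ω => by tauto))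
      have m2 := (pr_marginal p (fun ω => W ω = w ∧ τ (Z ω) = t) U).trans
        (Finset.sum_congr rfl fun u' _ =>
          pr_congr p (show ∀ ω, ((W ω = w ∧ τ (Z ω) = t) ∧ U ω = u')
            ↔ (W ω = w ∧ τ (Z ω) = t ∧ U ω = u') from fun ω => by tauto))
      rw [← m1, ← m2, sub_eq_zero]
      have e3 : pr p (fun ω => W ω = w ∧ Z ω = z)
          = pr p (fun ω => W ω = w ∧ Z ω = z ∧ τ (Z ω) = t) :=
        pr_congr p (fun ω => Iff.intro
          (fun h => ⟨h.1, h.2, by rw [h.2, hzt]⟩)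
          (fun h => ⟨h.1, h.2.1⟩))
      have e4 : pr p (fun ω => Z ω = z)
          = pr p (fun ω => Z ω = z ∧ τ (Z ω) = t) :=
        pr_congr p (fun ω => Iff.intro
          (fun h => ⟨h, by rw [h, hzt]⟩) (fun h => h.1))
      rw [e3, e4]
      exact hWZT w z t
    -- completeness gives g(U ω) = 0 everywhere
    have hg0 := hcomplete g hcex
    by_cases hu : ∃ ω0, U ω0 = u
    · obtain ⟨ω0, hω0⟩ := hu
      have hPU : (0:ℝ) < pr p (fun ω => U ω = u) := pr_pos p hp ω0 hω0
      have hgu : g u = 0 := by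
        have h := hg0 ω0
        rwa [hω0] at h
      have hnum : pr p (fun ω => Z ω = z ∧ U ω = u) * pr p (fun ω => τ (Z ω) = t)
          - pr p (fun ω => τ (Z ω) = t ∧ U ω = u) * pr p (fun ω => Z ω = z) = 0 := by
        have h2 : g u * pr p (fun ω => U ω = u)
            = pr p (fun ω => Z ω = z ∧ U ω = u) * pr p (fun ω => τ (Z ω) = t)
              - pr p (fun ω => τ (Z ω) = t ∧ U ω = u) * pr p (fun ω => Z ω = z) := by
          simp only [hg]
          exact div_mul_cancel₀ _ hPU.ne'
        rw [hgu, zero_mul] at h2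
        exact h2.symm
      have e1 : pr p (fun ω => U ω = u ∧ Z ω = z ∧ τ (Z ω) = t)
          = pr p (fun ω => Z ω = z ∧ U ω = u) :=
        pr_congr p (fun ω => Iff.intro
          (fun h => ⟨h.2.1, h.1⟩)
          (fun h => ⟨h.2, h.1, by rw [h.1, hzt]⟩))
      have e2 : pr p (fun ω => U ω = u ∧ τ (Z ω) = t)
          = pr p (fun ω => τ (Z ω) = t ∧ U ω = u) :=
        pr_congr p (fun ω => by tauto)
      have e4 : pr p (fun ω => Z ω = z ∧ τ (Z ω) = t)
          = pr p (fun ω => Z ω = z) :=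
        pr_congr p (fun ω => Iff.intro (fun h => h.1)
          (fun h => ⟨h, by rw [h, hzt]⟩))
      rw [e1, e2, e4]
      linarith [hnum]
    · push_neg at hu
      have z1 : pr p (fun ω => U ω = u ∧ Z ω = z ∧ τ (Z ω) = t) = 0 :=
        pr_eq_zero p (fun ω h => hu ω h.1)
      have z2 : pr p (fun ω => U ω = u ∧ τ (Z ω) = t) = 0 :=
        pr_eq_zero p (fun ω h => hu ω h.1)
      rw [z1, z2, zero_mul, zero_mul]
  · -- τ z ≠ t : both sides vanish
    have z1 : pr p (fun ω => U ω = u ∧ Z ω = z ∧ τ (Z ω) = t) = 0 :=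
      pr_eq_zero p (fun ω h => hzt (h.2.1 ▸ h.2.2))
    have z2 : pr p (fun ω => Z ω = z ∧ τ (Z ω) = t) = 0 :=
      pr_eq_zero p (fun ω h => hzt (h.1 ▸ h.2))
    rw [z1, z2, zero_mul, mul_zero]

/-- with `W ⊥ Z | U`, completeness of `W` for `U`, and a function
`T = τ(Z)` with `W ⊥ Z | T`, we get `U ⊥ Z | T`.  (Discrete setting with
strictly positive probabilities; conditional independence stated via
cross-multiplied factorization of conditional pmfs.) -/
theorem U_indep_Z_given_T {Ω 𝓤 𝓩 𝓦 𝓣 : Type*} [Fintype Ω]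
    (p : Ω → ℝ) (hp : ∀ ω, 0 < p ω) (hsum : ∑ ω, p ω = 1)
    (U : Ω → 𝓤) (Z : Ω → 𝓩) (W : Ω → 𝓦) (τ : 𝓩 → 𝓣)
    -- W ⊥ Z | U
    (hWZU : ∀ (w : 𝓦) (z : 𝓩) (u : 𝓤),
      pr p (fun ω => W ω = w ∧ Z ω = z ∧ U ω = u) * pr p (fun ω => U ω = u)
        = pr p (fun ω => W ω = w ∧ U ω = u) * pr p (fun ω => Z ω = z ∧ U ω = u))
    -- completeness of W for U: E[g(U)|W] = 0 a.s. implies g(U) = 0 a.s.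
    (hcomplete : ∀ g : 𝓤 → ℝ,
      (∀ w : 𝓦, cex p (fun ω => g (U ω)) (fun ω => W ω = w) = 0) → ∀ ω, g (U ω) = 0)
    -- W ⊥ Z | T where T = τ ∘ Z
    (hWZT : ∀ (w : 𝓦) (z : 𝓩) (t : 𝓣),
      pr p (fun ω => W ω = w ∧ Z ω = z ∧ τ (Z ω) = t) * pr p (fun ω => τ (Z ω) = t)
        = pr p (fun ω => W ω = w ∧ τ (Z ω) = t) * pr p (fun ω => Z ω = z ∧ τ (Z ω) = t)) :
    -- conclusion: U ⊥ Z | T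
    ∀ (u : 𝓤) (z : 𝓩) (t : 𝓣),
      pr p (fun ω => U ω = u ∧ Z ω = z ∧ τ (Z ω) = t) * pr p (fun ω => τ (Z ω) = t)
        = pr p (fun ω => U ω = u ∧ τ (Z ω) = t) * pr p (fun ω => Z ω = z ∧ τ (Z ω) = t) := U_indep_Z_given_T_aux p hp hsum U Z W τ hWZU hcomplete hWZT
end

section
/- Suppose Y = k₀(A) + ε where E[ε | Z, U] = E[ε | U], T = τ(Z) satisfies U ⊥ Z | T, and Z is complete for (A,T) in the sense that for any square-integrable g, E[g(A,T) | Z] = 0 a.s. implies g(A,T) = 0 a.s. Then any square-integrable h with E[Y | Z] = E[h(A,T) | Z] a.s. satisfies h(A,T) = k₀(A) + E[ε | T] almost surely. -/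
open MeasureTheory ProbabilityTheory Filter Set


theorem memLp_two_condexp_aux {α : Type*} {m m0 : MeasurableSpace α} {μ : Measure α}
    [IsFiniteMeasure μ] (hm : m ≤ m0) {f : α → ℝ} (hf : MemLp f 2 μ) :
    MemLp (μ[f|m]) 2 μ := by
  have heq : (μ[f|m]) =ᵐ[μ] ((condExpL2 ℝ ℝ hm (hf.toLp f) : Lp ℝ 2 μ) : α → ℝ) := by
    refine (ae_eq_condExp_of_forall_setIntegral_eq hm (hf.integrable one_le_two)
      (fun s hs hμs => integrableOn_condExpL2_of_measure_ne_top hm hμs.ne _)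
      (fun s hs hμs => ?_) (aestronglyMeasurable_condExpL2 hm _)).symm
    rw [integral_condExpL2_eq hm (hf.toLp f) hs hμs.ne]
    exact setIntegral_congr_ae (hm s hs) (hf.coeFn_toLp.mono fun x hx _ => hx)
  exact (Lp.memLp _).ae_eq heq.symm


theorem key_integral {Ω 𝓤 𝓩 : Type*} {m' : MeasurableSpace Ω}
    [mΩ : MeasurableSpace Ω] [StandardBorelSpace Ω]
    [MeasurableSpace 𝓤] [MeasurableSpace 𝓩] (μ : Measure Ω) [IsProbabilityMeasure μ]
    {U : Ω → 𝓤} {Z : Ω → 𝓩} (hU : Measurable U) (hZ : Measurable Z)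
    (hm' : m' ≤ mΩ)
    (hindep : CondIndepFun m' hm' U Z μ)
    {s' : Set 𝓩} (hs' : MeasurableSet s')
    {ψ : Ω → ℝ} (hψm : StronglyMeasurable[MeasurableSpace.comap U inferInstance] ψ)
    (hψ : Integrable ψ μ) :
    ∫ x in Z ⁻¹' s', ψ x ∂μ
      = ∫ x, (μ⟦Z ⁻¹' s' | m'⟧) x * (μ[ψ|m']) x ∂μ := by
  have hmU_le : MeasurableSpace.comap U inferInstance ≤ mΩ := hU.comap_le
  set B : Set Ω := Z ⁻¹' s' with hB_def
  have hB0 : MeasurableSet B := hZ hs'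
  set w : Ω → ℝ := μ⟦B | m'⟧ with hw_def
  have hw_aesm : AEStronglyMeasurable w μ :=
    (stronglyMeasurable_condExp.mono hm').aestronglyMeasurable
  have hw_nonneg : 0 ≤ᵐ[μ] w :=
    condExp_nonneg (ae_of_all _ fun x => Set.indicator_nonneg (fun _ _ => zero_le_one) x)
  have hw_le_one : w ≤ᵐ[μ] fun _ => (1 : ℝ) := by
    have h1 : μ[fun _ => (1:ℝ)|m'] = fun _ => (1:ℝ) := condExp_const hm' 1
    have := condExp_mono (m := m') ((integrable_const (1:ℝ)).indicator hB0)
      (integrable_const (1:ℝ) (μ := μ))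
      (ae_of_all _ fun x => Set.indicator_le_self' (fun _ _ => zero_le_one) x)
    rwa [h1] at this
  have hw_bound : ∀ᵐ x ∂μ, ‖w x‖ ≤ 1 := by
    filter_upwards [hw_nonneg, hw_le_one] with x h0 h1
    simp only [Pi.zero_apply] at h0
    rw [Real.norm_eq_abs, abs_le]
    exact ⟨by linarith, h1⟩
  -- the Lipschitz bound for the right-hand side functional
  have hG_lip : ∀ φ₁ φ₂ : Ω → ℝ, Integrable φ₁ μ → Integrable φ₂ μ →
      |(∫ x, w x * (μ[φ₁|m']) x ∂μ) - ∫ x, w x * (μ[φ₂|m']) x ∂μ|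
        ≤ ∫ x, ‖φ₁ x - φ₂ x‖ ∂μ := by
    intro φ₁ φ₂ h₁ h₂
    have hi₁ : Integrable (fun x => w x * (μ[φ₁|m']) x) μ :=
      integrable_condExp.bdd_mul hw_aesm hw_bound
    have hi₂ : Integrable (fun x => w x * (μ[φ₂|m']) x) μ :=
      integrable_condExp.bdd_mul hw_aesm hw_bound
    rw [← integral_sub hi₁ hi₂]
    calc |∫ x, (w x * (μ[φ₁|m']) x - w x * (μ[φ₂|m']) x) ∂μ|
        = ‖∫ x, (w x * (μ[φ₁|m']) x - w x * (μ[φ₂|m']) x) ∂μ‖ := (Real.norm_eq_abs _).symm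
      _ ≤ ∫ x, ‖w x * (μ[φ₁|m']) x - w x * (μ[φ₂|m']) x‖ ∂μ := norm_integral_le_integral_norm _
      _ = ∫ x, |w x * (μ[φ₁|m']) x - w x * (μ[φ₂|m']) x| ∂μ := by simp [Real.norm_eq_abs]
      _ ≤ ∫ x, |(μ[φ₁ - φ₂|m']) x| ∂μ := by
          refine integral_mono_ae ((hi₁.sub hi₂).abs) integrable_condExp.abs ?_
          filter_upwards [hw_bound, condExp_sub h₁ h₂ (m := m')] with x hx hsub
          rw [← mul_sub, abs_mul, hsub, Pi.sub_apply]
          exact mul_le_of_le_one_left (abs_nonneg _) hx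
      _ ≤ ∫ x, |(φ₁ - φ₂) x| ∂μ := integral_abs_condExp_le _
      _ = ∫ x, ‖φ₁ x - φ₂ x‖ ∂μ := by
          simp [Real.norm_eq_abs]
  -- base case : indicators of `mU`-measurable sets
  have hbase : ∀ (c : ℝ) (t : Set Ω), MeasurableSet[MeasurableSpace.comap U inferInstance] t →
      ∫ x in B, t.indicator (fun _ => c) x ∂μ
        = ∫ x, w x * (μ[t.indicator (fun _ => c)|m']) x ∂μ := by
    rintro c t ⟨u, hu, rfl⟩
    have hprod := (condIndepFun_iff_condExp_inter_preimage_eq_mul hU hZ).mp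
      hindep u s' hu hs'
    have ht0 : MeasurableSet (U ⁻¹' u) := hU hu
    have hind_eq : (U ⁻¹' u).indicator (fun _ => c)
        = fun x => c • (U ⁻¹' u).indicator (fun _ => (1:ℝ)) x := by
      ext x
      by_cases hx : x ∈ U ⁻¹' u <;> simp [Set.indicator_apply, hx]
    have hce : μ[(U ⁻¹' u).indicator (fun _ => c)|m']
        =ᵐ[μ] fun x => c • (μ⟦U ⁻¹' u | m'⟧) x := by
      rw [hind_eq]
      exact (condExp_smul c _ m').trans (by rfl)
    calc ∫ x in B, (U ⁻¹' u).indicator (fun _ => c) x ∂μ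
        = ∫ _x in B ∩ U ⁻¹' u, c ∂μ := setIntegral_indicator ht0
      _ = (μ (B ∩ U ⁻¹' u)).toReal • c := by rw [setIntegral_const]; rfl
      _ = c * (μ (U ⁻¹' u ∩ B)).toReal := by rw [Set.inter_comm, smul_eq_mul, mul_comm]
      _ = c * ∫ x, (U ⁻¹' u ∩ B).indicator (fun _ => (1:ℝ)) x ∂μ := by
          rw [integral_indicator (ht0.inter hB0), setIntegral_const]; simp [Measure.real]
      _ = c * ∫ x, (μ⟦U ⁻¹' u ∩ B | m'⟧) x ∂μ := by
          rw [integral_condExp hm']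
      _ = c * ∫ x, (μ⟦U ⁻¹' u | m'⟧) x * w x ∂μ := by
          rw [integral_congr_ae hprod]
      _ = ∫ x, c * ((μ⟦U ⁻¹' u | m'⟧) x * w x) ∂μ := by
          rw [integral_const_mul]
      _ = ∫ x, w x * (c • (μ⟦U ⁻¹' u | m'⟧) x) ∂μ := by
          congr 1; ext x; simp only [smul_eq_mul]; ring
      _ = ∫ x, w x * (μ[(U ⁻¹' u).indicator (fun _ => c)|m']) x ∂μ := by
          refine integral_congr_ae ?_
          filter_upwards [hce] with x hx
          rw [hx]
  -- the key identity, by induction on strongly measurable functions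
  have hKEY : ∀ ⦃φ : Ω → ℝ⦄, MemLp φ 1 μ →
      AEStronglyMeasurable[MeasurableSpace.comap U inferInstance] φ μ →
      ∫ x in B, φ x ∂μ = ∫ x, w x * (μ[φ|m']) x ∂μ := by
    refine MemLp.induction_stronglyMeasurable hmU_le ENNReal.one_ne_top
      (fun φ => ∫ x in B, φ x ∂μ = ∫ x, w x * (μ[φ|m']) x ∂μ) ?_ ?_ ?_ ?_
    · intro c t ht _
      exact hbase c t ht
    · intro φ₁ φ₂ _ h₁ h₂ _ _ hP₁ hP₂
      rw [memLp_one_iff_integrable] at h₁ h₂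
      have hi₁ : Integrable (fun x => w x * (μ[φ₁|m']) x) μ :=
        integrable_condExp.bdd_mul hw_aesm hw_bound
      have hi₂ : Integrable (fun x => w x * (μ[φ₂|m']) x) μ :=
        integrable_condExp.bdd_mul hw_aesm hw_bound
      calc ∫ x in B, (φ₁ + φ₂) x ∂μ
          = ∫ x in B, φ₁ x ∂μ + ∫ x in B, φ₂ x ∂μ :=
            integral_add h₁.integrableOn h₂.integrableOn
        _ = ∫ x, w x * (μ[φ₁|m']) x ∂μ + ∫ x, w x * (μ[φ₂|m']) x ∂μ := by rw [hP₁, hP₂]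
        _ = ∫ x, (w x * (μ[φ₁|m']) x + w x * (μ[φ₂|m']) x) ∂μ := (integral_add hi₁ hi₂).symm
        _ = ∫ x, w x * (μ[φ₁ + φ₂|m']) x ∂μ := by
            refine integral_congr_ae ?_
            filter_upwards [condExp_add h₁ h₂ (m := m')] with x hx
            rw [hx, Pi.add_apply, mul_add]
    · -- closedness
      have heq₁ : (fun f : lpMeas ℝ ℝ (MeasurableSpace.comap U inferInstance) 1 μ =>
            ∫ x in B, (f : Ω → ℝ) x ∂μ)
          = (fun f : Lp ℝ 1 μ => ∫ x in B, f x ∂μ) ∘ Submodule.subtypeL _ := by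
        rfl
      have heq₂ : (fun f : lpMeas ℝ ℝ (MeasurableSpace.comap U inferInstance) 1 μ =>
            ∫ x, w x * (μ[(f : Ω → ℝ)|m']) x ∂μ)
          = (fun f : Lp ℝ 1 μ => ∫ x, w x * (μ[(f : Ω → ℝ)|m']) x ∂μ)
              ∘ Submodule.subtypeL _ := by
        rfl
      refine isClosed_eq ?_ ?_
      · rw [heq₁]
        exact (continuous_setIntegral B).comp (ContinuousLinearMap.continuous _)
      · rw [heq₂]
        refine Continuous.comp ?_ (ContinuousLinearMap.continuous _)
        refine (LipschitzWith.of_dist_le' (K := 1) (fun f g => ?_)).continuous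
        have hfg : dist f g = ∫ x, ‖(f : Ω → ℝ) x - (g : Ω → ℝ) x‖ ∂μ := by
          rw [L1.dist_eq_integral_dist]
          exact integral_congr_ae (Eventually.of_forall fun x => by simp [dist_eq_norm])
        calc dist (∫ x, w x * (μ[(f : Ω → ℝ)|m']) x ∂μ) (∫ x, w x * (μ[(g : Ω → ℝ)|m']) x ∂μ)
            = |(∫ x, w x * (μ[(f : Ω → ℝ)|m']) x ∂μ) - ∫ x, w x * (μ[(g : Ω → ℝ)|m']) x ∂μ| :=
              Real.dist_eq _ _
          _ ≤ ∫ x, ‖(f : Ω → ℝ) x - (g : Ω → ℝ) x‖ ∂μ :=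
              hG_lip _ _ (L1.integrable_coeFn f) (L1.integrable_coeFn g)
          _ = dist f g := hfg.symm
          _ = 1 * dist f g := (one_mul _).symm
    · -- ae congruence
      intro φ₁ φ₂ hφeq h₁ hP
      rw [memLp_one_iff_integrable] at h₁
      have h₂ : Integrable φ₂ μ := h₁.congr hφeq
      calc ∫ x in B, φ₂ x ∂μ = ∫ x in B, φ₁ x ∂μ :=
            setIntegral_congr_ae hB0 (hφeq.symm.mono fun x hx _ => hx)
        _ = ∫ x, w x * (μ[φ₁|m']) x ∂μ := hP
        _ = ∫ x, w x * (μ[φ₂|m']) x ∂μ := by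
            refine integral_congr_ae ?_
            filter_upwards [condExp_congr_ae hφeq (m := m')] with x hx
            rw [hx]
  exact hKEY (memLp_one_iff_integrable.mpr hψ) hψm.aestronglyMeasurable

theorem condexp_proj_of_condIndepFun {Ω 𝓤 𝓩 : Type*} {m' : MeasurableSpace Ω}
    [mΩ : MeasurableSpace Ω] [StandardBorelSpace Ω]
    [MeasurableSpace 𝓤] [MeasurableSpace 𝓩] (μ : Measure Ω) [IsProbabilityMeasure μ]
    {U : Ω → 𝓤} {Z : Ω → 𝓩} (hU : Measurable U) (hZ : Measurable Z)
    (hm'Z : m' ≤ MeasurableSpace.comap Z inferInstance)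
    (hm' : m' ≤ mΩ)
    (hindep : CondIndepFun m' hm' U Z μ)
    {ψ : Ω → ℝ} (hψm : StronglyMeasurable[MeasurableSpace.comap U inferInstance] ψ)
    (hψ : Integrable ψ μ) :
    μ[ψ | MeasurableSpace.comap Z inferInstance] =ᵐ[μ] μ[ψ | m'] := by
  have hmZ : MeasurableSpace.comap Z inferInstance ≤ mΩ := hZ.comap_le
  refine (ae_eq_condExp_of_forall_setIntegral_eq hmZ hψ
    (fun s _ _ => integrable_condExp.integrableOn) (fun s hs _ => ?_)
    ((stronglyMeasurable_condExp.mono hm'Z).aestronglyMeasurable)).symm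
  obtain ⟨s', hs', rfl⟩ := hs
  rw [key_integral μ hU hZ hm' hindep hs' hψm hψ]
  have hBmeas : MeasurableSet (Z ⁻¹' s') := hZ hs'
  have hind_sm : StronglyMeasurable ((Z ⁻¹' s').indicator (fun _ => (1:ℝ))) :=
    stronglyMeasurable_const.indicator hBmeas
  have hind_int : Integrable ((Z ⁻¹' s').indicator (fun _ => (1:ℝ))) μ :=
    (integrable_const 1).indicator hBmeas
  have hind_bd : ∀ᵐ x ∂μ, ‖(Z ⁻¹' s').indicator (fun _ => (1:ℝ)) x‖ ≤ 1 :=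
    ae_of_all _ fun x => by
      by_cases hx : x ∈ Z ⁻¹' s' <;> simp [Set.indicator_apply, hx]
  have hF_int : Integrable (μ[ψ|m'] * (Z ⁻¹' s').indicator (fun _ => (1:ℝ))) μ := by
    have h := integrable_condExp.bdd_mul (c := 1)
      (f := (Z ⁻¹' s').indicator (fun _ => (1:ℝ))) (g := μ[ψ|m'])
      hind_sm.aestronglyMeasurable hind_bd
    exact h.congr (Eventually.of_forall fun x => by simp [mul_comm])
  calc ∫ x in Z ⁻¹' s', (μ[ψ|m']) x ∂μ
      = ∫ x, (Z ⁻¹' s').indicator (fun x => (μ[ψ|m']) x) x ∂μ :=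
        (integral_indicator hBmeas).symm
    _ = ∫ x, (μ[ψ|m'] * (Z ⁻¹' s').indicator (fun _ => (1:ℝ))) x ∂μ := by
        refine integral_congr_ae (Eventually.of_forall fun x => ?_)
        by_cases hx : x ∈ Z ⁻¹' s' <;> simp [Set.indicator_apply, hx]
    _ = ∫ x, (μ[μ[ψ|m'] * (Z ⁻¹' s').indicator (fun _ => (1:ℝ))|m']) x ∂μ :=
        (integral_condExp hm').symm
    _ = ∫ x, ((μ[ψ|m']) x * (μ[(Z ⁻¹' s').indicator (fun _ => (1:ℝ))|m']) x) ∂μ := by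
        refine integral_congr_ae ?_
        filter_upwards [condExp_mul_of_stronglyMeasurable_left stronglyMeasurable_condExp
          hF_int hind_int] with x hx
        rw [hx, Pi.mul_apply]
    _ = ∫ x, (μ⟦Z ⁻¹' s' | m'⟧) x * (μ[ψ|m']) x ∂μ := by
        refine integral_congr_ae (Eventually.of_forall fun x => ?_)
        simp [mul_comm]


/-- in the linearly separable outcome model `Y = k₀(A) + ε` with
`E[ε | Z, U] = E[ε | U]`, index sufficiency `U ⊥ Z | T` for `T = τ(Z)`, and
completeness of `Z` for `(A, T)`, any square-integrable `h` with
`E[Y | Z] = E[h(A,T) | Z]` a.s. satisfies `h(A,T) = k₀(A) + E[ε | T]` a.s. -/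
theorem linearly_separable_identification
    {Ω 𝓐 𝓩 𝓤 𝓣 : Type*} [MeasurableSpace Ω] [StandardBorelSpace Ω]
    [MeasurableSpace 𝓐] [MeasurableSpace 𝓩] [MeasurableSpace 𝓤] [MeasurableSpace 𝓣]
    (μ : Measure Ω) [IsProbabilityMeasure μ]
    (A : Ω → 𝓐) (Z : Ω → 𝓩) (U : Ω → 𝓤) (τ : 𝓩 → 𝓣) (ε Y : Ω → ℝ)
    (k₀ : 𝓐 → ℝ) (h : 𝓐 × 𝓣 → ℝ)
    (hA : Measurable A) (hZ : Measurable Z) (hU : Measurable U) (hτ : Measurable τ)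
    (hεL2 : MemLp ε 2 μ) (hYL2 : MemLp Y 2 μ)
    (hkL2 : MemLp (fun ω => k₀ (A ω)) 2 μ)
    (hhL2 : MemLp (fun ω => h (A ω, τ (Z ω))) 2 μ)
    -- outcome model
    (hY : Y = fun ω => k₀ (A ω) + ε ω)
    -- instrument exogeneity conditional on U : E[ε | Z, U] = E[ε | U]
    (hexog : μ[ε | MeasurableSpace.comap (fun ω => (Z ω, U ω)) inferInstance]
        =ᵐ[μ] μ[ε | MeasurableSpace.comap U inferInstance])
    -- index sufficiency: U ⊥ Z | T
    (hUZT : CondIndepFun (MeasurableSpace.comap (fun ω => τ (Z ω)) inferInstance)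
        ((hτ.comp hZ).comap_le) U Z μ)
    -- completeness of Z for (A, T)
    (hcomplete : ∀ g : 𝓐 × 𝓣 → ℝ, MemLp (fun ω => g (A ω, τ (Z ω))) 2 μ →
        μ[(fun ω => g (A ω, τ (Z ω))) | MeasurableSpace.comap Z inferInstance] =ᵐ[μ] 0 →
        (fun ω => g (A ω, τ (Z ω))) =ᵐ[μ] 0)
    -- the conditional moment restriction satisfied by h
    (hmatch : μ[Y | MeasurableSpace.comap Z inferInstance]
        =ᵐ[μ] μ[(fun ω => h (A ω, τ (Z ω))) | MeasurableSpace.comap Z inferInstance]) :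
    (fun ω => h (A ω, τ (Z ω)))
      =ᵐ[μ] fun ω =>
        k₀ (A ω) + (μ[ε | MeasurableSpace.comap (fun ω => τ (Z ω)) inferInstance]) ω := by
  subst hY
  -- σ-algebra comparisons
  have hmZ : MeasurableSpace.comap Z inferInstance ≤ _ := hZ.comap_le
  have hmT : MeasurableSpace.comap (fun ω => τ (Z ω)) inferInstance ≤ _ :=
    (hτ.comp hZ).comap_le
  have hmZU : MeasurableSpace.comap (fun ω => (Z ω, U ω)) inferInstance ≤ _ :=
    (hZ.prodMk hU).comap_le
  have hmT_le_mZ : MeasurableSpace.comap (fun ω => τ (Z ω)) inferInstance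
      ≤ MeasurableSpace.comap Z inferInstance := by
    rw [show (fun ω => τ (Z ω)) = τ ∘ Z from rfl, ← MeasurableSpace.comap_comp]
    exact MeasurableSpace.comap_mono hτ.comap_le
  have hmZ_le_mZU : MeasurableSpace.comap Z inferInstance
      ≤ MeasurableSpace.comap (fun ω => (Z ω, U ω)) inferInstance := by
    have hco : MeasurableSpace.comap Z inferInstance
        = MeasurableSpace.comap (fun ω => (Z ω, U ω))
            (MeasurableSpace.comap Prod.fst inferInstance) := by
      rw [MeasurableSpace.comap_comp]; rfl
    rw [hco]
    exact MeasurableSpace.comap_mono measurable_fst.comap_le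
  have hmT_le_mZU := hmT_le_mZ.trans hmZ_le_mZU
  -- integrability
  have hε_int : Integrable ε μ := hεL2.integrable one_le_two
  have hk_int : Integrable (fun ω => k₀ (A ω)) μ := hkL2.integrable one_le_two
  have hh_int : Integrable (fun ω => h (A ω, τ (Z ω))) μ := hhL2.integrable one_le_two
  -- step ★ : E[ε|Z] = E[ε|T]
  have s1 : μ[ε | MeasurableSpace.comap Z inferInstance]
      =ᵐ[μ] μ[μ[ε | MeasurableSpace.comap U inferInstance] |
            MeasurableSpace.comap Z inferInstance] :=
    (condExp_condExp_of_le hmZ_le_mZU hmZU).symm.trans (condExp_congr_ae hexog)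
  have s2 : μ[μ[ε | MeasurableSpace.comap U inferInstance] |
        MeasurableSpace.comap Z inferInstance]
      =ᵐ[μ] μ[μ[ε | MeasurableSpace.comap U inferInstance] |
        MeasurableSpace.comap (fun ω => τ (Z ω)) inferInstance] :=
    condexp_proj_of_condIndepFun μ hU hZ hmT_le_mZ hmT hUZT
      stronglyMeasurable_condExp integrable_condExp
  have s3 : μ[μ[ε | MeasurableSpace.comap U inferInstance] |
        MeasurableSpace.comap (fun ω => τ (Z ω)) inferInstance]
      =ᵐ[μ] μ[ε | MeasurableSpace.comap (fun ω => τ (Z ω)) inferInstance] :=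
    (condExp_congr_ae hexog.symm).trans (condExp_condExp_of_le hmT_le_mZU hmZU)
  have hstar : μ[ε | MeasurableSpace.comap Z inferInstance]
      =ᵐ[μ] μ[ε | MeasurableSpace.comap (fun ω => τ (Z ω)) inferInstance] :=
    s1.trans (s2.trans s3)
  -- Doob–Dynkin via condDistrib
  set f : 𝓣 → ℝ := fun t => ∫ y, y ∂condDistrib ε (fun ω => τ (Z ω)) μ t with hf_def
  have hf_eq : μ[ε | MeasurableSpace.comap (fun ω => τ (Z ω)) inferInstance]
      =ᵐ[μ] fun ω => f (τ (Z ω)) :=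
    condExp_ae_eq_integral_condDistrib' (X := fun ω => τ (Z ω)) (hτ.comp hZ) hε_int
  have hcondL2 : MemLp (μ[ε | MeasurableSpace.comap (fun ω => τ (Z ω)) inferInstance]) 2 μ :=
    memLp_two_condexp_aux hmT hεL2
  have hfT_L2 : MemLp (fun ω => f (τ (Z ω))) 2 μ := hcondL2.ae_eq hf_eq
  have hfT_int : Integrable (fun ω => f (τ (Z ω))) μ := hfT_L2.integrable one_le_two
  -- the completeness witness
  set g : 𝓐 × 𝓣 → ℝ := fun p => h p - k₀ p.1 - f p.2 with hg_def
  have hgL2 : MemLp (fun ω => g (A ω, τ (Z ω))) 2 μ := (hhL2.sub hkL2).sub hfT_L2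
  have hrepr : (fun ω => g (A ω, τ (Z ω)))
      = ((fun ω => h (A ω, τ (Z ω))) - fun ω => k₀ (A ω)) - fun ω => f (τ (Z ω)) := rfl
  have e1 : μ[(fun ω => g (A ω, τ (Z ω))) | MeasurableSpace.comap Z inferInstance]
      =ᵐ[μ] μ[((fun ω => h (A ω, τ (Z ω))) - fun ω => k₀ (A ω)) |
          MeasurableSpace.comap Z inferInstance]
        - μ[(fun ω => f (τ (Z ω))) | MeasurableSpace.comap Z inferInstance] := by
    rw [hrepr]
    exact condExp_sub (hh_int.sub hk_int) hfT_int _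
  have e2 : μ[((fun ω => h (A ω, τ (Z ω))) - fun ω => k₀ (A ω)) |
        MeasurableSpace.comap Z inferInstance]
      =ᵐ[μ] μ[(fun ω => h (A ω, τ (Z ω))) | MeasurableSpace.comap Z inferInstance]
        - μ[(fun ω => k₀ (A ω)) | MeasurableSpace.comap Z inferInstance] :=
    condExp_sub hh_int hk_int _
  have c4 : μ[(fun ω => f (τ (Z ω))) | MeasurableSpace.comap Z inferInstance]
      =ᵐ[μ] μ[ε | MeasurableSpace.comap (fun ω => τ (Z ω)) inferInstance] :=
    (condExp_congr_ae hf_eq.symm).trans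
      (condExp_of_aestronglyMeasurable' hmZ
        ((stronglyMeasurable_condExp.mono hmT_le_mZ).aestronglyMeasurable)
        integrable_condExp)
  have c2 : μ[(fun ω => k₀ (A ω) + ε ω) | MeasurableSpace.comap Z inferInstance]
      =ᵐ[μ] μ[(fun ω => k₀ (A ω)) | MeasurableSpace.comap Z inferInstance]
        + μ[ε | MeasurableSpace.comap Z inferInstance] :=
    condExp_add hk_int hε_int _
  have hg0 : μ[(fun ω => g (A ω, τ (Z ω))) | MeasurableSpace.comap Z inferInstance]
      =ᵐ[μ] 0 := by
    filter_upwards [e1, e2, c4, c2, hmatch, hstar] with ω h1 h2 h3 h4 h5 h6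
    simp only [Pi.sub_apply, Pi.add_apply, Pi.zero_apply] at *
    rw [h1, h2, h3, ← h5, h4]
    linarith
  have hgz := hcomplete g hgL2 hg0
  filter_upwards [hgz, hf_eq] with ω h1 h2
  simp only [hg_def, Pi.zero_apply] at h1
  rw [h2]
  linarith
end

section
/- Let Z, U, W be mean-zero random row vectors with Σ_ZW = γ_Zᵀ Σ_U γ_W for matrices γ_Z, γ_W with γ_W γ_Wᵀ invertible, and suppose Σ_UW = Σ_U γ_W and Σ_UZ = Σ_U γ_Z. Let C_Z C_Wᵀ = Σ_ZW be any factorization with C_Z of full column rank d_U, and let M := I - Σ_Z^{-1} C_Z (C_Zᵀ Σ_Z^{-1} C_Z)^{-1} C_Zᵀ. Then for any matrix D, the orthogonalized instrument Z̃ := Z M D satisfies Σ_W Z̃ = 0. -/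
open Matrix

/-- with `Σ_WZ = C_W C_Zᵀ` for `C_Z` of full column rank `d_U`, and
`M := I − Σ_Z⁻¹ C_Z (C_Zᵀ Σ_Z⁻¹ C_Z)⁻¹ C_Zᵀ`, the orthogonalized instrument
`Z̃ := Z M D` is uncorrelated with `W`: `Σ_W Z̃ = 0`, for any matrix `D`.
(Expectations on a finite probability space; Σ_XY := E[XᵀY].) -/
theorem orthogonalized_instrument_uncorrelated
    {Ω : Type*} [Fintype Ω] {dU dZ dW m : ℕ}
    (p : Ω → ℝ) (hp : ∀ ω, 0 ≤ p ω) (hsum : ∑ ω, p ω = 1)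
    (Z : Ω → Fin dZ → ℝ) (W : Ω → Fin dW → ℝ)
    (CZ : Matrix (Fin dZ) (Fin dU) ℝ) (CW : Matrix (Fin dW) (Fin dU) ℝ)
    (D : Matrix (Fin dZ) (Fin m) ℝ)
    -- mean zero
    (hZ0 : ∀ j, ∑ ω, p ω * Z ω j = 0)
    (hW0 : ∀ k, ∑ ω, p ω * W ω k = 0)
    -- Σ_Z is positive definite
    (hSZpd : (Matrix.of fun j j' => ∑ ω, p ω * Z ω j * Z ω j' :
        Matrix (Fin dZ) (Fin dZ) ℝ).PosDef)
    -- C_Z has full column rank d_U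
    (hrank : CZ.rank = dU)
    -- factorization of the cross-covariance: Σ_WZ = C_W C_Zᵀ
    (hfact : (Matrix.of fun k j => ∑ ω, p ω * W ω k * Z ω j) = CW * CZᵀ) :
    -- Σ_W Z̃ = 0 for Z̃ := Z M D
    (Matrix.of fun k j => ∑ ω, p ω * W ω k *
        Matrix.vecMul (Z ω)
          (((1 : Matrix (Fin dZ) (Fin dZ) ℝ) -
              (Matrix.of fun j j' => ∑ ω', p ω' * Z ω' j * Z ω' j')⁻¹ * CZ *
                (CZᵀ * (Matrix.of fun j j' => ∑ ω', p ω' * Z ω' j * Z ω' j')⁻¹ * CZ)⁻¹ * CZᵀ)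
            * D) j)
      = (0 : Matrix (Fin dW) (Fin m) ℝ) := by
  set S : Matrix (Fin dZ) (Fin dZ) ℝ :=
    Matrix.of fun j j' => ∑ ω, p ω * Z ω j * Z ω j' with hS
  -- C_Z has injective mulVec
  have hinj : Function.Injective CZ.mulVec := by
    rw [← Matrix.coe_mulVecLin, ← LinearMap.ker_eq_bot]
    have h1 := LinearMap.finrank_range_add_finrank_ker CZ.mulVecLin
    have h2 : Module.finrank ℝ (LinearMap.range CZ.mulVecLin) = dU := by
      simpa [Matrix.rank, Fintype.card_fin] using hrank
    rw [h2] at h1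
    simp only [Module.finrank_fin_fun] at h1
    have : Module.finrank ℝ (LinearMap.ker CZ.mulVecLin) = 0 := by omega
    exact Submodule.finrank_eq_zero.mp this
  have hSinv : (S⁻¹).PosDef := hSZpd.inv
  -- the Gram matrix is positive definite
  have hG : (CZᵀ * S⁻¹ * CZ).PosDef := by
    rw [Matrix.posDef_iff_dotProduct_mulVec]; constructor
    · have hH := Matrix.isHermitian_conjTranspose_mul_mul CZ hSinv.isHermitian
      have : CZᴴ = CZᵀ := by ext i j; simp [Matrix.conjTranspose_apply]
      rwa [this] at hH
    · intro x hx
      have hCZx : CZ *ᵥ x ≠ 0 := fun h => hx (hinj (by simpa using h))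
      have := hSinv.dotProduct_mulVec_pos hCZx
      have key : star x ⬝ᵥ ((CZᵀ * S⁻¹ * CZ) *ᵥ x)
          = star (CZ *ᵥ x) ⬝ᵥ (S⁻¹ *ᵥ (CZ *ᵥ x)) := by
        simp only [star_trivial, ← Matrix.mulVec_mulVec, Matrix.dotProduct_mulVec,
          Matrix.vecMul_transpose]
      rw [key]
      exact this
  have hGunit : IsUnit (CZᵀ * S⁻¹ * CZ).det := hG.isUnit.map (Matrix.detMonoidHom)
  -- the key cancellation: C_Zᵀ * M = 0
  have hkey : CZᵀ * ((1 : Matrix (Fin dZ) (Fin dZ) ℝ) -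
      S⁻¹ * CZ * (CZᵀ * S⁻¹ * CZ)⁻¹ * CZᵀ) = 0 := by
    rw [Matrix.mul_sub, Matrix.mul_one]
    have : CZᵀ * (S⁻¹ * CZ * (CZᵀ * S⁻¹ * CZ)⁻¹ * CZᵀ)
        = (CZᵀ * S⁻¹ * CZ) * (CZᵀ * S⁻¹ * CZ)⁻¹ * CZᵀ := by
      simp only [Matrix.mul_assoc]
    rw [this, Matrix.mul_nonsing_inv _ hGunit, Matrix.one_mul, sub_self]
  set M : Matrix (Fin dZ) (Fin dZ) ℝ :=
    (1 : Matrix (Fin dZ) (Fin dZ) ℝ) - S⁻¹ * CZ * (CZᵀ * S⁻¹ * CZ)⁻¹ * CZᵀ with hM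
  -- rewrite the LHS as Σ_WZ * (M * D)
  set A : Matrix (Fin dZ) (Fin m) ℝ := M * D with hA
  have hLHS : (Matrix.of fun k j => ∑ ω, p ω * W ω k *
        Matrix.vecMul (Z ω) A j)
      = (Matrix.of fun k j => ∑ ω, p ω * W ω k * Z ω j) * A := by
    ext k j
    simp only [Matrix.of_apply, Matrix.mul_apply, Matrix.vecMul, dotProduct,
      Finset.mul_sum, Finset.sum_mul]
    rw [Finset.sum_comm]
    congr 1; ext i; congr 1; ext ω; ring
  calc (Matrix.of fun k j => ∑ ω, p ω * W ω k * Matrix.vecMul (Z ω) A j)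
      = (Matrix.of fun k j => ∑ ω, p ω * W ω k * Z ω j) * A := hLHS
    _ = CW * (CZᵀ * M) * D := by rw [hfact, hA]; simp only [Matrix.mul_assoc]
    _ = 0 := by rw [hkey, Matrix.mul_zero, Matrix.zero_mul]
end

section
/- Let 𝒯 ⊆ L²(Z) be a closed subspace and suppose θ₀ = E[m(O; τ₀)] for all τ₀ in a set 𝒯_valid, where τ ↦ E[m(O;τ)] is a continuous linear functional on 𝒯 with Riesz representer α, i.e. E[m(O;τ)] = E[α(Z)τ(Z)] for all τ ∈ 𝒯. Define q₀(W) := E[ξ₀(Z) | W] for any ξ₀ ∈ 𝒯 satisfying Π_𝒯[E[ξ₀(Z)|W] | Z] = α(Z), and define ψ(O; τ, q) := m(O;τ) + q(W)(g₀(Z) − τ(Z)) where g₀ satisfies E[g₀(Z)|W] = E[τ₀(Z)|W] for all τ₀ ∈ 𝒯_valid. Then for any τ ∈ 𝒯 and q ∈ L²(W): E[ψ(O;τ,q)] − θ₀ = −E[(q(W) − q₀(W))(τ(Z) − τ₀(Z))]. -/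
open RealInnerProductSpace

/-- error identity for the debiased moment.
`H` plays the role of `L²(Ω)`.  `EW` is the conditional expectation given `W`
(the orthogonal projection onto `L²(W)`), and `PT` the orthogonal projection onto
the closed subspace `𝒯 ⊆ L²(Z)`; projections are encoded as self-adjoint
idempotent linear maps.  `α` is the Riesz representer of `τ ↦ E[m(O;τ)]` on `𝒯`
(so `E[m(O;τ)] = ⟪α, τ⟫` for `τ ∈ 𝒯`), `q₀ = E[ξ₀(Z)|W]` with
`Π_𝒯[E[ξ₀(Z)|W]|Z] = α`, `g₀` satisfies `E[g₀(Z)|W] = E[τ₀(Z)|W]`, and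
`E[ψ(O;τ,q)] = ⟪α,τ⟫ + ⟪q, g₀ − τ⟫`.  Then
`E[ψ(O;τ,q)] − θ₀ = −E[(q − q₀)(τ − τ₀)]`. -/
theorem debiased_moment_error_identity
    {H : Type*} [NormedAddCommGroup H] [InnerProductSpace ℝ H]
    (EW PT : H →ₗ[ℝ] H)
    (hEWidem : ∀ x, EW (EW x) = EW x) (hEWsa : ∀ x y, ⟪EW x, y⟫ = ⟪x, EW y⟫)
    (hPTidem : ∀ x, PT (PT x) = PT x) (hPTsa : ∀ x y, ⟪PT x, y⟫ = ⟪x, PT y⟫)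
    (α τ τ₀ g₀ ξ₀ q q₀ : H) (θ₀ : ℝ)
    (hα : PT α = α) (hτ : PT τ = τ) (hτ₀ : PT τ₀ = τ₀)
    (hg₀ : EW g₀ = EW τ₀)
    (hξ₀ : PT (EW ξ₀) = α) (hq₀ : q₀ = EW ξ₀)
    (hq : EW q = q)
    (hθ : θ₀ = ⟪α, τ₀⟫) :
    (⟪α, τ⟫ + ⟪q, g₀ - τ⟫) - θ₀ = -⟪q - q₀, τ - τ₀⟫ := by
  have h1 : ⟪q, g₀⟫ = ⟪q, τ₀⟫ := by
    conv_lhs => rw [← hq, hEWsa, hg₀, ← hEWsa, hq]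
  have h2 : ⟪α, τ - τ₀⟫ = ⟪q₀, τ - τ₀⟫ := by
    rw [← hξ₀, hPTsa, map_sub, hτ, hτ₀, hq₀]
  have h3 : ⟪α, τ - τ₀⟫ = ⟪α, τ⟫ - ⟪α, τ₀⟫ := inner_sub_right _ _ _
  have h4 : ⟪q₀, τ - τ₀⟫ = ⟪q₀, τ⟫ - ⟪q₀, τ₀⟫ := inner_sub_right _ _ _
  have h5 : ⟪q, g₀ - τ⟫ = ⟪q, g₀⟫ - ⟪q, τ⟫ := inner_sub_right _ _ _
  have h6 : ⟪q - q₀, τ - τ₀⟫ = ⟪q, τ⟫ - ⟪q, τ₀⟫ - (⟪q₀, τ⟫ - ⟪q₀, τ₀⟫) := by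
    simp [inner_sub_left, inner_sub_right]; ring
  rw [hθ, h5, h1, h6]
  linarith [h3, h4, h2]
end

section
/- Under the same setting as the debiased moment result, the estimate error satisfies the bound |E[ψ(O;τ,q)] − θ₀| ≤ min{ ‖E[τ−τ₀ | W]‖₂ · ‖q − q₀‖₂ , ‖τ − τ₀‖₂ · ‖Π_𝒯[E[q − q₀ | Z]]‖₂ } for τ₀ ∈ 𝒯_valid and q₀ ∈ 𝒬₀. -/
open RealInnerProductSpace

/-- error bound for the debiased moment
`ψ(O;τ,q) = m(O;τ) + q(W)(g₀(Z) − τ(Z))`: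
`|E[ψ(O;τ,q)] − θ₀| ≤ min{ ‖E[τ−τ₀|W]‖·‖q−q₀‖ , ‖τ−τ₀‖·‖Π_𝒯[E[q−q₀|Z]]‖ }`.
Setting as in the error identity: `H = L²(Ω)`, `EW` conditional expectation given
`W`, `PT` orthogonal projection onto `𝒯 ⊆ L²(Z)` (so that `Π_𝒯[E[·|Z]] = PT`),
`α` the Riesz representer, `q₀ ∈ 𝒬₀`, `τ₀ ∈ 𝒯_valid`. -/
theorem debiased_moment_error_bound
    {H : Type*} [NormedAddCommGroup H] [InnerProductSpace ℝ H]
    (EW PT : H →ₗ[ℝ] H)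
    (hEWidem : ∀ x, EW (EW x) = EW x) (hEWsa : ∀ x y, ⟪EW x, y⟫ = ⟪x, EW y⟫)
    (hPTidem : ∀ x, PT (PT x) = PT x) (hPTsa : ∀ x y, ⟪PT x, y⟫ = ⟪x, PT y⟫)
    (α τ τ₀ g₀ ξ₀ q q₀ : H) (θ₀ : ℝ)
    (hα : PT α = α) (hτ : PT τ = τ) (hτ₀ : PT τ₀ = τ₀)
    (hg₀ : EW g₀ = EW τ₀)
    (hξ₀ : PT (EW ξ₀) = α) (hq₀ : q₀ = EW ξ₀)
    (hq : EW q = q)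
    (hθ : θ₀ = ⟪α, τ₀⟫) :
    |(⟪α, τ⟫ + ⟪q, g₀ - τ⟫) - θ₀|
      ≤ min (‖EW (τ - τ₀)‖ * ‖q - q₀‖) (‖τ - τ₀‖ * ‖PT (q - q₀)‖) := by
  have hPTd : PT (τ - τ₀) = τ - τ₀ := by rw [map_sub, hτ, hτ₀]
  have hEWq₀ : EW q₀ = q₀ := by rw [hq₀, hEWidem]
  have hEWd : EW (q₀ - q) = q₀ - q := by rw [map_sub, hEWq₀, hq]
  have h1 : ⟪q, g₀ - τ⟫ = ⟪q, τ₀ - τ⟫ := by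
    calc ⟪q, g₀ - τ⟫ = ⟪EW q, g₀ - τ⟫ := by rw [hq]
    _ = ⟪q, EW (g₀ - τ)⟫ := hEWsa _ _
    _ = ⟪q, EW (τ₀ - τ)⟫ := by rw [map_sub, map_sub, hg₀]
    _ = ⟪EW q, τ₀ - τ⟫ := (hEWsa _ _).symm
    _ = ⟪q, τ₀ - τ⟫ := by rw [hq]
  have h2 : ⟪α, τ - τ₀⟫ = ⟪q₀, τ - τ₀⟫ := by
    calc ⟪α, τ - τ₀⟫ = ⟪PT (EW ξ₀), τ - τ₀⟫ := by rw [hξ₀]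
    _ = ⟪EW ξ₀, PT (τ - τ₀)⟫ := hPTsa _ _
    _ = ⟪q₀, τ - τ₀⟫ := by rw [hPTd, hq₀]
  have key : (⟪α, τ⟫ + ⟪q, g₀ - τ⟫) - θ₀ = ⟪q₀ - q, τ - τ₀⟫ := by
    rw [h1, hθ]
    have := h2
    simp only [inner_sub_left, inner_sub_right] at this ⊢
    linarith
  rw [key]
  refine le_min ?_ ?_
  · have : ⟪q₀ - q, τ - τ₀⟫ = ⟪q₀ - q, EW (τ - τ₀)⟫ := by
      rw [← hEWd, hEWsa, hEWd]
    rw [this]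
    calc |⟪q₀ - q, EW (τ - τ₀)⟫| ≤ ‖q₀ - q‖ * ‖EW (τ - τ₀)‖ :=
          abs_real_inner_le_norm _ _
    _ = ‖EW (τ - τ₀)‖ * ‖q - q₀‖ := by rw [norm_sub_rev]; ring
  · have : ⟪q₀ - q, τ - τ₀⟫ = ⟪PT (q₀ - q), τ - τ₀⟫ := by
      rw [hPTsa, hPTd]
    rw [this]
    calc |⟪PT (q₀ - q), τ - τ₀⟫| ≤ ‖PT (q₀ - q)‖ * ‖τ - τ₀‖ :=
          abs_real_inner_le_norm _ _
    _ = ‖τ - τ₀‖ * ‖PT (q - q₀)‖ := by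
        rw [show q₀ - q = -(q - q₀) by abel, map_neg, norm_neg]; ring
end

section
/- Double robustness: with ψ(O;τ,q) = m(O;τ) + q(W)(g₀(Z) − τ(Z)), for any τ₀ ∈ 𝒯_valid, q₀ ∈ 𝒬₀, τ ∈ 𝒯, q ∈ L²(W), it holds that θ₀ = E[ψ(O; τ₀, q)] = E[ψ(O; τ, q₀)]. -/
open RealInnerProductSpace

/-- double robustness of the debiased moment
`ψ(O;τ,q) = m(O;τ) + q(W)(g₀(Z) − τ(Z))`: for any `τ₀ ∈ 𝒯_valid`, `q₀ ∈ 𝒬₀`,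
`τ ∈ 𝒯`, `q ∈ L²(W)`, `θ₀ = E[ψ(O;τ₀,q)] = E[ψ(O;τ,q₀)]`.
Setting: `H = L²(Ω)`, `EW` the conditional expectation given `W` and `PT` the
orthogonal projection onto the closed subspace `𝒯 ⊆ L²(Z)` (self-adjoint
idempotent maps); `α` the Riesz representer of `τ ↦ E[m(O;τ)]` on `𝒯`, so that
`E[ψ(O;τ,q)] = ⟪α,τ⟫ + ⟪q, g₀ − τ⟫` and `θ₀ = ⟪α,τ₀⟫`. -/
theorem double_robustness
    {H : Type*} [NormedAddCommGroup H] [InnerProductSpace ℝ H]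
    (EW PT : H →ₗ[ℝ] H)
    (hEWidem : ∀ x, EW (EW x) = EW x) (hEWsa : ∀ x y, ⟪EW x, y⟫ = ⟪x, EW y⟫)
    (hPTidem : ∀ x, PT (PT x) = PT x) (hPTsa : ∀ x y, ⟪PT x, y⟫ = ⟪x, PT y⟫)
    (α τ τ₀ g₀ ξ₀ q q₀ : H) (θ₀ : ℝ)
    (hα : PT α = α) (hτ : PT τ = τ) (hτ₀ : PT τ₀ = τ₀)
    (hg₀ : EW g₀ = EW τ₀)
    (hξ₀ : PT (EW ξ₀) = α) (hq₀ : q₀ = EW ξ₀)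
    (hq : EW q = q)
    (hθ : θ₀ = ⟪α, τ₀⟫) :
    θ₀ = ⟪α, τ₀⟫ + ⟪q, g₀ - τ₀⟫ ∧ θ₀ = ⟪α, τ⟫ + ⟪q₀, g₀ - τ⟫ := by
  constructor
  · have h1 : ⟪q, g₀ - τ₀⟫ = (0:ℝ) := by
      calc ⟪q, g₀ - τ₀⟫ = ⟪EW q, g₀ - τ₀⟫ := by rw [hq]
        _ = ⟪q, EW (g₀ - τ₀)⟫ := hEWsa _ _
        _ = ⟪q, EW g₀ - EW τ₀⟫ := by rw [map_sub]
        _ = 0 := by rw [hg₀, sub_self, inner_zero_right]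
    rw [h1, add_zero]; exact hθ
  · have key : ∀ x : H, PT x = x → ⟪q₀, x⟫ = ⟪α, x⟫ := by
      intro x hx
      calc ⟪q₀, x⟫ = ⟪EW ξ₀, PT x⟫ := by rw [hq₀, hx]
        _ = ⟪PT (EW ξ₀), x⟫ := (hPTsa _ _).symm
        _ = ⟪α, x⟫ := by rw [hξ₀]
    have hg : ⟪q₀, g₀⟫ = ⟪α, τ₀⟫ := by
      calc ⟪q₀, g₀⟫ = ⟪EW ξ₀, g₀⟫ := by rw [hq₀]
        _ = ⟪EW (EW ξ₀), g₀⟫ := by rw [hEWidem]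
        _ = ⟪EW ξ₀, EW g₀⟫ := hEWsa _ _
        _ = ⟪EW ξ₀, EW τ₀⟫ := by rw [hg₀]
        _ = ⟪EW (EW ξ₀), τ₀⟫ := (hEWsa _ _).symm
        _ = ⟪q₀, τ₀⟫ := by rw [hEWidem, hq₀]
        _ = ⟪α, τ₀⟫ := key τ₀ hτ₀
    rw [inner_sub_right, hg, key τ hτ, hθ]; ring
end
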